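/- Let R be a reduced root system with positive system, A a set of pairwise strongly orthogonal roots satisfying property ## with respect to this positive system, and A₂ ⊂ A, β > 0 such that S_{A₂}(β) < 0. Then there exists α ∈ A₂ such that s_α(β) < 0. -/
import Mathlib


open scoped InnerProductSpace

variable {V : Type*} [NormedAddCommGroup V] [InnerProductSpace ℝ V]

/-- The (orthogonal) reflection in the root `α`: `s_α(v) = v - (2⟪v,α⟫/⟪α,α⟫)α`. -/
noncomputable def sRefl (α v : V) : V := v - (2 * ⟪v, α⟫_ℝ / ⟪α, α⟫_ℝ) • α

/-- The coroot of `α`, identified with a vector via the invariant inner product. -/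
noncomputable def coroot (α : V) : V := (2 / ⟪α, α⟫_ℝ) • α

/-- `S_A`: the product of the (commuting) reflections in the pairwise orthogonal
elements of `A`, given by its closed formula. -/
noncomputable def SRefl (A : Finset V) (v : V) : V :=
  v - ∑ α ∈ A, (2 * ⟪v, α⟫_ℝ / ⟪α, α⟫_ℝ) • α

/-- A (reduced) root system in `V`, with the ambient inner product Weyl-invariant. -/
structure IsRootSystem (R : Set V) : Prop where
  finite : R.Finite
  nonempty : R.Nonempty
  ne_zero : ∀ α ∈ R, α ≠ (0 : V)
  refl_mem : ∀ α ∈ R, ∀ β ∈ R, sRefl α β ∈ R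
  integral : ∀ α ∈ R, ∀ β ∈ R, ∃ n : ℤ, 2 * ⟪β, α⟫_ℝ / ⟪α, α⟫_ℝ = (n : ℝ)
  reduced : ∀ α ∈ R, ∀ t : ℝ, t • α ∈ R → t = 1 ∨ t = -1

/-- `α` and `β` are strongly orthogonal: neither their sum nor difference is a root. -/
def StronglyOrthogonal (R : Set V) (α β : V) : Prop := α + β ∉ R ∧ α - β ∉ R

/-- A strongly orthogonal subset of `R`. -/
def IsSOS (R A : Set V) : Prop := A ⊆ R ∧ A.Pairwise (StronglyOrthogonal R)

/-- A choice of positive roots in `R`. -/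
structure IsPositiveSystem (R P : Set V) : Prop where
  subset : P ⊆ R
  mem_or_neg_mem : ∀ α ∈ R, α ∈ P ∨ -α ∈ P
  not_both : ∀ α ∈ P, -α ∉ P
  add_mem : ∀ α ∈ P, ∀ β ∈ P, α + β ∈ R → α + β ∈ P

/-- Property `#(R,>,A)`: for distinct `α₁, α₂ ∈ A` and `β > 0`,
`s_{α₁}(β) < 0` implies `s_{α₂}(β) > 0`. -/
def PropSharp (P A : Set V) : Prop :=
  ∀ α₁ ∈ A, ∀ α₂ ∈ A, α₁ ≠ α₂ → ∀ β ∈ P, -(sRefl α₁ β) ∈ P → sRefl α₂ β ∈ P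

/-- Property `##(R,>,A)`: for disjoint `A₁, A₂ ⊆ A` and `β > 0` with `S_{A₁}(β) < 0`
one has `S_{A₂}(β) > 0` and `S_{A₁}S_{A₂}(β) < 0`. -/
def PropSharpSharp (P : Set V) (A : Finset V) : Prop :=
  ∀ A₁ ⊆ A, ∀ A₂ ⊆ A, Disjoint A₁ A₂ → ∀ β ∈ P, -(SRefl A₁ β) ∈ P →
    SRefl A₂ β ∈ P ∧ -(SRefl A₁ (SRefl A₂ β)) ∈ P

/-- `R⁺_B = {β : β > 0 ∧ S_B(β) < 0}`. -/
noncomputable def RPlus (P : Set V) (B : Finset V) : Set V :=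
  {β | β ∈ P ∧ -(SRefl B β) ∈ P}

/- ########## auxiliary lemmas ########## -/

lemma inner_self_pos' {α : V} (h : α ≠ 0) : 0 < ⟪α, α⟫_ℝ :=
  lt_of_le_of_ne real_inner_self_nonneg (Ne.symm (inner_self_ne_zero.mpr h))

lemma sRefl_self {α : V} (h : ⟪α, α⟫_ℝ ≠ 0) : sRefl α α = -α := by
  rw [sRefl, mul_div_assoc, div_self h, mul_one]
  module

lemma SRefl_singleton (α v : V) : SRefl {α} v = sRefl α v := by
  simp [SRefl, sRefl]

lemma sRefl_neg (α v : V) : sRefl (-α) v = sRefl α v := by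
  simp [sRefl, inner_neg_neg, inner_neg_right, mul_neg, neg_div, neg_smul, smul_neg, neg_neg]

lemma sRefl_neg_arg (α v : V) : sRefl α (-v) = -(sRefl α v) := by
  simp [sRefl, inner_neg_left, mul_neg, neg_div, neg_smul, smul_neg]
  module

lemma sRefl_invol {γ : V} (h : ⟪γ, γ⟫_ℝ ≠ 0) (β : V) : sRefl γ (sRefl γ β) = β := by
  simp only [sRefl, inner_sub_left, real_inner_smul_left]
  match_scalars <;> (field_simp; try ring)

lemma sRefl_comm {a γ : V} (h : ⟪a, γ⟫_ℝ = 0) (β : V) :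
    sRefl γ (sRefl a β) = sRefl a (sRefl γ β) := by
  have h' : ⟪γ, a⟫_ℝ = 0 := by rw [real_inner_comm]; exact h
  simp only [sRefl, inner_sub_left, real_inner_smul_left, h, h', mul_zero, sub_zero]
  module

lemma IsRootSystem.neg_mem {R : Set V} (hR : IsRootSystem R) {α : V} (hα : α ∈ R) : -α ∈ R := by
  have h : ⟪α, α⟫_ℝ ≠ 0 := (inner_self_pos' (hR.ne_zero α hα)).ne'
  have := hR.refl_mem α hα α hα
  rwa [sRefl_self h] at this

lemma aux_pos {R : Set V} (hR : IsRootSystem R) {α δ : V} (hα : α ∈ R) (hδ : δ ∈ R)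
    (hpos : 0 < ⟪α, δ⟫_ℝ) (hne : δ ≠ α) : α - δ ∈ R ∨ δ - α ∈ R := by
  have haa : 0 < ⟪α, α⟫_ℝ := inner_self_pos' (hR.ne_zero α hα)
  have hdd : 0 < ⟪δ, δ⟫_ℝ := inner_self_pos' (hR.ne_zero δ hδ)
  obtain ⟨n, hn⟩ := hR.integral α hα δ hδ
  obtain ⟨m, hm⟩ := hR.integral δ hδ α hα
  have hsym : ⟪δ, α⟫_ℝ = ⟪α, δ⟫_ℝ := real_inner_comm _ _
  have hn0 : (0:ℝ) < (n : ℝ) := by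
    rw [← hn]; exact div_pos (by nlinarith) haa
  have hm0 : (0:ℝ) < (m : ℝ) := by
    rw [← hm]; exact div_pos (by nlinarith) hdd
  have hn1 : 1 ≤ n := by exact_mod_cast hn0
  have hm1 : 1 ≤ m := by exact_mod_cast hm0
  have hCS := real_inner_mul_inner_self_le α δ
  have hnmR : (n : ℝ) * (m : ℝ) ≤ 4 := by
    rw [← hn, ← hm, div_mul_div_comm, div_le_iff₀ (mul_pos haa hdd)]
    nlinarith
  have hnm : n * m ≤ 4 := by exact_mod_cast hnmR
  by_cases hn1' : n = 1
  · right
    have hs : sRefl α δ = δ - α := by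
      rw [sRefl, hn, hn1', Int.cast_one, one_smul]
    have := hR.refl_mem α hα δ hδ
    rwa [hs] at this
  by_cases hm1' : m = 1
  · left
    have hs : sRefl δ α = α - δ := by
      rw [sRefl, hm, hm1', Int.cast_one, one_smul]
    have := hR.refl_mem δ hδ α hα
    rwa [hs] at this
  · exfalso
    have hn2 : 2 ≤ n := by omega
    have hm2 : 2 ≤ m := by omega
    have hne2 : n = 2 := by nlinarith
    have hme2 : m = 2 := by nlinarith
    rw [hne2] at hn; rw [hme2] at hm
    have e1 : ⟪δ, α⟫_ℝ = ⟪α, α⟫_ℝ := by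
      rw [div_eq_iff haa.ne'] at hn; push_cast at hn; linarith
    have e2 : ⟪α, δ⟫_ℝ = ⟪δ, δ⟫_ℝ := by
      rw [div_eq_iff hdd.ne'] at hm; push_cast at hm; linarith
    have h0 : ⟪α - δ, α - δ⟫_ℝ = 0 := by
      rw [inner_sub_left, inner_sub_right, inner_sub_right]
      nlinarith
    have h4 : α = δ := sub_eq_zero.mp (inner_self_eq_zero.mp h0)
    exact hne h4.symm

lemma orth_of_so {R : Set V} (hR : IsRootSystem R) {α γ : V} (hα : α ∈ R) (hγ : γ ∈ R)
    (h1 : α + γ ∉ R) (h2 : α - γ ∉ R) (hne : γ ≠ α) (hnne : γ ≠ -α) : ⟪α, γ⟫_ℝ = 0 := by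
  by_contra h
  rcases lt_or_gt_of_ne h with hlt | hgt
  · have hδ : -γ ∈ R := hR.neg_mem hγ
    have hpos : 0 < ⟪α, -γ⟫_ℝ := by rw [inner_neg_right]; linarith
    have hne' : -γ ≠ α := fun hh => hnne (neg_eq_iff_eq_neg.mp hh)
    rcases aux_pos hR hα hδ hpos hne' with hc | hc
    · exact h1 (by simpa [sub_neg_eq_add] using hc)
    · have := hR.neg_mem hc
      exact h1 (by simpa [neg_sub, sub_neg_eq_add] using this)
  · rcases aux_pos hR hα hγ hgt hne with hc | hc
    · exact h2 hc
    · have := hR.neg_mem hc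
      exact h2 (by simpa [neg_sub] using this)

lemma no_neg_pair {R P : Set V} {A : Finset V} (hR : IsRootSystem R) (hP : IsPositiveSystem R P)
    (hsharp2 : PropSharpSharp P A) {α : V} (hαR : α ∈ R) (hαA : α ∈ A) (hnA : -α ∈ A) : False := by
  have hα0 : α ≠ 0 := hR.ne_zero α hαR
  have hαα : ⟪α, α⟫_ℝ ≠ 0 := (inner_self_pos' hα0).ne'
  have hne : α ≠ -α := by
    intro h
    apply hα0
    have : α + α = 0 := by nth_rewrite 2 [h]; simp
    have h2 : (2:ℝ) • α = 0 := by rw [two_smul]; exact this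
    simpa [smul_eq_zero] using h2
  rcases hP.mem_or_neg_mem α hαR with hp | hp
  · have key := hsharp2 {α} (by simpa using hαA) {-α} (by simpa using hnA)
      (Finset.disjoint_singleton.mpr hne) α hp
      (by rw [SRefl_singleton, sRefl_self hαα, neg_neg]; exact hp)
    have h1 := key.1
    rw [SRefl_singleton, sRefl_neg, sRefl_self hαα] at h1
    exact hP.not_both α hp h1
  · have hnαα : ⟪-α, -α⟫_ℝ ≠ 0 := by simpa using hαα
    have key := hsharp2 {-α} (by simpa using hnA) {α} (by simpa using hαA)
      (Finset.disjoint_singleton.mpr (Ne.symm hne)) (-α) hp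
      (by rw [SRefl_singleton, sRefl_self hnαα, neg_neg]; exact hp)
    have h1 := key.1
    rw [SRefl_singleton, sRefl_neg_arg, sRefl_self hαα, neg_neg] at h1
    exact hP.not_both (-α) hp (by simpa using h1)

lemma SRefl_insert [DecidableEq V] {a : V} {s : Finset V} (ha : a ∉ s)
    (horth : ∀ γ ∈ s, ⟪a, γ⟫_ℝ = 0) (β : V) :
    SRefl (insert a s) β = SRefl s (sRefl a β) := by
  rw [SRefl, SRefl, Finset.sum_insert ha, sRefl]
  have hc : ∀ γ ∈ s,
      (2 * ⟪β - (2 * ⟪β, a⟫_ℝ / ⟪a, a⟫_ℝ) • a, γ⟫_ℝ / ⟪γ, γ⟫_ℝ) • γ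
        = (2 * ⟪β, γ⟫_ℝ / ⟪γ, γ⟫_ℝ) • γ := by
    intro γ hγ
    rw [inner_sub_left, real_inner_smul_left, horth γ hγ, mul_zero, sub_zero]
  rw [Finset.sum_congr rfl hc]
  abel

/-- Under property `##`, if `A₂ ⊆ A` and `β > 0` satisfy `S_{A₂}(β) < 0`, then there is
`α ∈ A₂` with `s_α(β) < 0`. -/
theorem statement9 (R P : Set V) (A : Finset V) (hR : IsRootSystem R)
    (hP : IsPositiveSystem R P) (hA : IsSOS R ↑A) (hsharp2 : PropSharpSharp P A)
    (A₂ : Finset V) (hA₂ : A₂ ⊆ A) (β : V) (hβ : β ∈ P)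
    (hneg : -(SRefl A₂ β) ∈ P) :
    ∃ α ∈ A₂, -(sRefl α β) ∈ P := by
  classical
  induction A₂ using Finset.induction_on generalizing β with
  | empty =>
    simp only [SRefl, Finset.sum_empty, sub_zero] at hneg
    exact absurd hneg (hP.not_both β hβ)
  | @insert a s ha ih =>
    have haA : a ∈ A := hA₂ (Finset.mem_insert_self a s)
    have hsA : s ⊆ A := fun x hx => hA₂ (Finset.mem_insert_of_mem hx)
    have haR : a ∈ R := hA.1 (by exact_mod_cast haA)
    have haa : ⟪a, a⟫_ℝ ≠ 0 := (inner_self_pos' (hR.ne_zero a haR)).ne'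
    have horth : ∀ γ ∈ s, ⟪a, γ⟫_ℝ = 0 := by
      intro γ hγ
      have hγA : γ ∈ A := hsA hγ
      have hγR : γ ∈ R := hA.1 (by exact_mod_cast hγA)
      have hne : a ≠ γ := fun h => ha (h ▸ hγ)
      have hso : StronglyOrthogonal R a γ :=
        hA.2 (by exact_mod_cast haA) (by exact_mod_cast hγA) hne
      refine orth_of_so hR haR hγR hso.1 hso.2 hne.symm ?_
      intro h
      exact no_neg_pair hR hP hsharp2 haR haA (by rw [← h]; exact hγA)
    by_cases h1 : -(sRefl a β) ∈ P
    · exact ⟨a, Finset.mem_insert_self a s, h1⟩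
    have hsaR : sRefl a β ∈ R := hR.refl_mem a haR β (hP.subset hβ)
    have hβ' : sRefl a β ∈ P := (hP.mem_or_neg_mem _ hsaR).resolve_right h1
    rw [SRefl_insert ha horth] at hneg
    obtain ⟨γ, hγs, hγ⟩ := ih hsA (sRefl a β) hβ' hneg
    by_cases h2 : -(sRefl γ β) ∈ P
    · exact ⟨γ, Finset.mem_insert_of_mem hγs, h2⟩
    exfalso
    have hγA : γ ∈ A := hsA hγs
    have hγR : γ ∈ R := hA.1 (by exact_mod_cast hγA)
    have hγγ : ⟪γ, γ⟫_ℝ ≠ 0 := (inner_self_pos' (hR.ne_zero γ hγR)).ne'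
    have hδR : sRefl γ β ∈ R := hR.refl_mem γ hγR β (hP.subset hβ)
    have hδP : sRefl γ β ∈ P := (hP.mem_or_neg_mem _ hδR).resolve_right h2
    have hcomm : sRefl γ (sRefl a β) = sRefl a (sRefl γ β) := sRefl_comm (horth γ hγs) β
    have hne : a ≠ γ := fun h => ha (h ▸ hγs)
    have key := hsharp2 {a} (by simpa using haA) {γ} (by simpa using hγA)
      (Finset.disjoint_singleton.mpr hne) (sRefl γ β) hδP
      (by rw [SRefl_singleton, ← hcomm]; exact hγ)
    have h3 := key.2
    rw [SRefl_singleton, SRefl_singleton, sRefl_invol hγγ] at h3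
    exact h1 h3
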